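/- Let n ≥ 1, u = (u_1,…,u_n) ∈ ℂ^n, Λ := diag(u_1,…,u_n), and A ∈ M_n(ℂ). Let γ : [0,1] → ℂ be continuously differentiable, let Ω ⊆ ℂ be open with γ([0,1]) ⊆ Ω, and let Ψ : Ω → ℂ^n be holomorphic satisfying (Λ − λ·I)·Ψ′(λ) = (A + I)·Ψ(λ) for all λ ∈ Ω. Define Y(z) := ∫_0^1 e^{γ(t)·z} Ψ(γ(t)) γ′(t) dt for z ∈ ℂ. If z_0 ∈ ℂ∖{0} is such that e^{γ(1)·z_0}(γ(1)·I − Λ)Ψ(γ(1)) = e^{γ(0)·z_0}(γ(0)·I − Λ)Ψ(γ(0)), then Y is differentiable at z_0 and Y′(z_0) = (Λ + A/z_0)·Y(z_0). -/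

import Mathlib

open scoped Matrix

open MeasureTheory intervalIntegral Set Metric in
/-- if `Ψ` is holomorphic on `Ω ⊇ γ([0,1])` and satisfies
`(Λ − λI)Ψ′(λ) = (A+I)Ψ(λ)`, and `Y(z) := ∫₀¹ e^{γ(t)z} Ψ(γ(t)) γ′(t) dt`, then at any
`z₀ ≠ 0` where the boundary term `e^{λz₀}(λI − Λ)Ψ(λ)` takes equal values at the two
endpoints of `γ`, `Y` is differentiable with `Y′(z₀) = (Λ + A/z₀)·Y(z₀)`. -/
theorem stmt15 {n : ℕ} (hn : 1 ≤ n) (u : Fin n → ℂ) (A : Matrix (Fin n) (Fin n) ℂ)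
    (γ γ' : ℝ → ℂ)
    (hγ : ∀ t ∈ Set.Icc (0 : ℝ) 1, HasDerivWithinAt γ (γ' t) (Set.Icc (0 : ℝ) 1) t)
    (hγ' : ContinuousOn γ' (Set.Icc (0 : ℝ) 1))
    (Ω : Set ℂ) (hΩ : IsOpen Ω) (hγΩ : ∀ t ∈ Set.Icc (0 : ℝ) 1, γ t ∈ Ω)
    (Ψ Ψ' : ℂ → (Fin n → ℂ))
    (hΨ : ∀ lam ∈ Ω, HasDerivAt Ψ (Ψ' lam) lam)
    (hODE : ∀ lam ∈ Ω,
      (Matrix.diagonal u - lam • (1 : Matrix (Fin n) (Fin n) ℂ)) *ᵥ Ψ' lam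
        = (A + 1) *ᵥ Ψ lam)
    (Y : ℂ → (Fin n → ℂ))
    (hY : ∀ z : ℂ, Y z = ∫ t in (0 : ℝ)..1, (Complex.exp (γ t * z) * γ' t) • Ψ (γ t))
    (z₀ : ℂ) (hz₀ : z₀ ≠ 0)
    (hbd : Complex.exp (γ 1 * z₀) •
          ((γ 1 • (1 : Matrix (Fin n) (Fin n) ℂ) - Matrix.diagonal u) *ᵥ Ψ (γ 1))
        = Complex.exp (γ 0 * z₀) •
          ((γ 0 • (1 : Matrix (Fin n) (Fin n) ℂ) - Matrix.diagonal u) *ᵥ Ψ (γ 0))) :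
    HasDerivAt Y ((Matrix.diagonal u + z₀⁻¹ • A) *ᵥ Y z₀) z₀ := by
  set Λ : Matrix (Fin n) (Fin n) ℂ := Matrix.diagonal u with hΛ
  -- continuity facts
  have hγc : ContinuousOn γ (Set.Icc 0 1) := fun t ht => (hγ t ht).continuousWithinAt
  have hvc : ContinuousOn (fun t => Ψ (γ t)) (Set.Icc 0 1) := fun t ht =>
    ((hΨ _ (hγΩ t ht)).continuousAt).comp_continuousWithinAt (hγc t ht)
  set F : ℂ → ℝ → (Fin n → ℂ) := fun z t => (Complex.exp (γ t * z) * γ' t) • Ψ (γ t) with hF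
  set Fd : ℂ → ℝ → (Fin n → ℂ) :=
    fun z t => (Complex.exp (γ t * z) * γ t * γ' t) • Ψ (γ t) with hFd
  have hFc : ∀ z : ℂ, ContinuousOn (F z) (Set.Icc 0 1) := by
    intro z
    exact (((Complex.continuous_exp.comp_continuousOn (hγc.mul continuousOn_const)).mul
      hγ').smul hvc)
  have hFdc : ContinuousOn (Fd z₀) (Set.Icc 0 1) := by
    exact ((((Complex.continuous_exp.comp_continuousOn (hγc.mul continuousOn_const)).mul
      hγc).mul hγ').smul hvc)
  have hIcc : Set.uIcc (0:ℝ) 1 = Set.Icc 0 1 := Set.uIcc_of_le zero_le_one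
  have hFi : ∀ z : ℂ, IntervalIntegrable (F z) volume 0 1 := fun z =>
    (hIcc ▸ hFc z).intervalIntegrable
  have hFdi : IntervalIntegrable (Fd z₀) volume 0 1 := (hIcc ▸ hFdc).intervalIntegrable
  -- bound function
  set bound : ℝ → ℝ := fun t =>
    (Real.exp (‖γ t‖ * (‖z₀‖ + 1)) * ‖γ t‖ * ‖γ' t‖) * ‖Ψ (γ t)‖ with hbound
  have hboundc : ContinuousOn bound (Set.Icc 0 1) := by
    exact (((Real.continuous_exp.comp_continuousOn
      (hγc.norm.mul continuousOn_const)).mul hγc.norm).mul hγ'.norm).mul hvc.norm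
  have hsub : Set.uIoc (0:ℝ) 1 ⊆ Set.Icc 0 1 := by
    rw [Set.uIoc_of_le zero_le_one]; exact Set.Ioc_subset_Icc_self
  -- derivative under the integral sign
  have hD : HasDerivAt (fun z => ∫ t in (0:ℝ)..1, F z t)
      (∫ t in (0:ℝ)..1, Fd z₀ t) z₀ := by
    refine (intervalIntegral.hasDerivAt_integral_of_dominated_loc_of_deriv_le
      (F := F) (F' := Fd) (bound := bound) (ball_mem_nhds z₀ one_pos) ?_ (hFi z₀) ?_ ?_ ?_ ?_).2
    · exact Filter.Eventually.of_forall fun z =>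
        ((hFc z).mono hsub).aestronglyMeasurable measurableSet_uIoc
    · exact (hFdc.mono hsub).aestronglyMeasurable measurableSet_uIoc
    · refine Filter.Eventually.of_forall fun t ht x hx => ?_
      have : ‖Complex.exp (γ t * x)‖ ≤ Real.exp (‖γ t‖ * (‖z₀‖ + 1)) := by
        rw [Complex.norm_exp]
        apply Real.exp_le_exp.2
        calc (γ t * x).re ≤ ‖γ t * x‖ := Complex.re_le_norm _
          _ = ‖γ t‖ * ‖x‖ := by rw [norm_mul]
          _ ≤ ‖γ t‖ * (‖z₀‖ + 1) := by
              refine mul_le_mul_of_nonneg_left ?_ (norm_nonneg _)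
              have := mem_ball_iff_norm.1 hx
              have h2 := norm_sub_norm_le x z₀
              linarith
      calc ‖Fd x t‖ = ‖Complex.exp (γ t * x)‖ * ‖γ t‖ * ‖γ' t‖ * ‖Ψ (γ t)‖ := by
            simp [hFd, norm_smul]
            try ring
        _ ≤ bound t := by
            have h1 : (0:ℝ) ≤ ‖γ t‖ * ‖γ' t‖ * ‖Ψ (γ t)‖ := by positivity
            have := mul_le_mul_of_nonneg_right this h1
            calc ‖Complex.exp (γ t * x)‖ * ‖γ t‖ * ‖γ' t‖ * ‖Ψ (γ t)‖
                = ‖Complex.exp (γ t * x)‖ * (‖γ t‖ * ‖γ' t‖ * ‖Ψ (γ t)‖) := by ring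
              _ ≤ Real.exp (‖γ t‖ * (‖z₀‖ + 1)) * (‖γ t‖ * ‖γ' t‖ * ‖Ψ (γ t)‖) := this
              _ = bound t := by rw [hbound]; ring
    · exact (hIcc ▸ hboundc).intervalIntegrable
    · refine Filter.Eventually.of_forall fun t ht x hx => ?_
      have h1 : HasDerivAt (fun z : ℂ => Complex.exp (γ t * z))
          (Complex.exp (γ t * x) * γ t) x := by
        simpa using ((hasDerivAt_id x).const_mul (γ t)).cexp
      have := (h1.mul_const (γ' t)).smul_const (Ψ (γ t))
      convert this using 2
      try ring
  -- the continuous linear map of multiplication by a matrix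
  set L : Matrix (Fin n) (Fin n) ℂ → ((Fin n → ℂ) →L[ℝ] (Fin n → ℂ)) :=
    fun M => LinearMap.toContinuousLinearMap ((Matrix.mulVecLin M).restrictScalars ℝ) with hL
  have hLapp : ∀ (M : Matrix (Fin n) (Fin n) ℂ) (x : Fin n → ℂ), L M x = M *ᵥ x := by
    intro M x
    simp [hL, Matrix.mulVecLin_apply]
  -- the boundary function and its derivative
  set g : ℝ → (Fin n → ℂ) := fun t =>
    Complex.exp (γ t * z₀) • ((γ t • (1 : Matrix (Fin n) (Fin n) ℂ) - Λ) *ᵥ Ψ (γ t)) with hg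
  set gd : ℝ → (Fin n → ℂ) := fun t =>
    (Complex.exp (γ t * z₀) * γ' t) •
      (z₀ • ((γ t • (1 : Matrix (Fin n) (Fin n) ℂ) - Λ) *ᵥ Ψ (γ t)) - A *ᵥ Ψ (γ t)) with hgd
  have hwv : ∀ s : ℝ, (γ s • (1 : Matrix (Fin n) (Fin n) ℂ) - Λ) *ᵥ Ψ (γ s)
      = γ s • Ψ (γ s) - Λ *ᵥ Ψ (γ s) := fun s => by
    rw [Matrix.sub_mulVec, Matrix.smul_mulVec, Matrix.one_mulVec]
  -- derivative of g inside (0,1)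
  have hderiv : ∀ t ∈ Set.Ioo (0:ℝ) 1, HasDerivAt g (gd t) t := by
    intro t ht
    have htmem : t ∈ Set.Icc (0:ℝ) 1 := Set.Ioo_subset_Icc_self ht
    have hγt : HasDerivAt γ (γ' t) t := (hγ t htmem).hasDerivAt (Icc_mem_nhds ht.1 ht.2)
    have hΩt : γ t ∈ Ω := hγΩ t htmem
    have hvt : HasDerivAt (fun s => Ψ (γ s)) (γ' t • Ψ' (γ t)) t := (hΨ _ hΩt).scomp t hγt
    have hexp : HasDerivAt (fun s => Complex.exp (γ s * z₀))
        (Complex.exp (γ t * z₀) * (γ' t * z₀)) t := by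
      simpa using (hγt.mul_const z₀).cexp
    have hsm := hγt.smul hvt
    have hLd : HasDerivAt (fun s => Λ *ᵥ Ψ (γ s)) (γ' t • (Λ *ᵥ Ψ' (γ t))) t := by
      have := ((L Λ).hasFDerivAt (x := Ψ (γ t))).comp_hasDerivAt t hvt
      simp only [Function.comp_def, hLapp] at this
      simpa [Matrix.mulVec_smul] using this
    have hcomb := hexp.smul (hsm.sub hLd)
    have hgfun : g = fun s => Complex.exp (γ s * z₀) • (γ s • Ψ (γ s) - Λ *ᵥ Ψ (γ s)) := by
      funext s; simp only [hg]; rw [hwv s]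
    rw [hgfun]
    refine hcomb.congr_deriv (Eq.symm ?_)
    -- algebraic identity using the ODE
    have hode' : γ t • Ψ' (γ t) - Λ *ᵥ Ψ' (γ t) = -(A *ᵥ Ψ (γ t)) - Ψ (γ t) := by
      have h := hODE (γ t) hΩt
      rw [Matrix.sub_mulVec, Matrix.smul_mulVec, Matrix.one_mulVec,
        Matrix.add_mulVec, Matrix.one_mulVec] at h
      funext i
      have hi := congrFun h i
      simp only [Pi.smul_apply, Pi.sub_apply, Pi.add_apply, Pi.neg_apply, smul_eq_mul] at hi ⊢
      linear_combination -hi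
    funext i
    have hi := congrFun hode' i
    simp only [Pi.smul_apply, Pi.sub_apply, Pi.neg_apply, smul_eq_mul] at hi
    simp only [hgd, hwv t, Pi.smul_apply, Pi.smul_apply', Pi.add_apply, Pi.sub_apply, smul_eq_mul]
    linear_combination (-(Complex.exp (γ t * z₀) * γ' t)) * hi
  -- continuity of g and gd
  have hΛvc : ContinuousOn (fun t => Λ *ᵥ Ψ (γ t)) (Set.Icc 0 1) := by
    have := (L Λ).continuous.comp_continuousOn hvc
    simpa [Function.comp_def, hLapp] using this
  have hAvc : ContinuousOn (fun t => A *ᵥ Ψ (γ t)) (Set.Icc 0 1) := by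
    have := (L A).continuous.comp_continuousOn hvc
    simpa [Function.comp_def, hLapp] using this
  have hexpc : ContinuousOn (fun t => Complex.exp (γ t * z₀)) (Set.Icc 0 1) :=
    Complex.continuous_exp.comp_continuousOn (hγc.mul continuousOn_const)
  have hgc : ContinuousOn g (Set.Icc 0 1) := by
    have : ContinuousOn (fun t => Complex.exp (γ t * z₀) •
        (γ t • Ψ (γ t) - Λ *ᵥ Ψ (γ t))) (Set.Icc 0 1) :=
      hexpc.smul ((hγc.smul hvc).sub hΛvc)
    refine this.congr fun s _ => ?_
    simp only [hg]; rw [hwv s]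
  have hgdc : ContinuousOn gd (Set.Icc 0 1) := by
    have : ContinuousOn (fun t => (Complex.exp (γ t * z₀) * γ' t) •
        (z₀ • (γ t • Ψ (γ t) - Λ *ᵥ Ψ (γ t)) - A *ᵥ Ψ (γ t))) (Set.Icc 0 1) :=
      (hexpc.mul hγ').smul (((hγc.smul hvc).sub hΛvc).const_smul z₀ |>.sub hAvc)
    refine this.congr fun s _ => ?_
    simp only [hgd]; rw [hwv s]
  have hgdi : IntervalIntegrable gd volume 0 1 := (hIcc ▸ hgdc).intervalIntegrable
  -- integration by parts / FTC
  have hIBP : ∫ t in (0:ℝ)..1, gd t = g 1 - g 0 :=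
    intervalIntegral.integral_eq_sub_of_hasDeriv_right_of_le zero_le_one hgc
      (fun t ht => (hderiv t ht).hasDerivWithinAt) hgdi
  have hg0 : g 1 - g 0 = 0 := sub_eq_zero.2 hbd
  -- decompose gd
  have hsplit : gd = fun t => z₀ • Fd z₀ t - (z₀ • (L Λ (F z₀ t)) + L A (F z₀ t)) := by
    funext t
    simp only [hgd, hF, hFd, hLapp, hwv t, Matrix.mulVec_smul]
    funext i
    simp only [Pi.smul_apply, Pi.add_apply, Pi.sub_apply, smul_eq_mul]
    ring
  have hLFi : ∀ M : Matrix (Fin n) (Fin n) ℂ,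
      IntervalIntegrable (fun t => L M (F z₀ t)) volume 0 1 := fun M =>
    (hIcc ▸ ((L M).continuous.comp_continuousOn (hFc z₀))).intervalIntegrable
  have hInt : ∫ t in (0:ℝ)..1, gd t
      = z₀ • (∫ t in (0:ℝ)..1, Fd z₀ t)
        - (z₀ • (L Λ (∫ t in (0:ℝ)..1, F z₀ t)) + L A (∫ t in (0:ℝ)..1, F z₀ t)) := by
    have i1 : IntervalIntegrable (fun t => z₀ • Fd z₀ t) volume 0 1 := hFdi.smul z₀
    have i2 : IntervalIntegrable (fun t => z₀ • (L Λ (F z₀ t))) volume 0 1 := (hLFi Λ).smul z₀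
    have i3 : IntervalIntegrable (fun t => z₀ • (L Λ (F z₀ t)) + L A (F z₀ t)) volume 0 1 :=
      i2.add (hLFi A)
    rw [hsplit]
    simp only []
    rw [intervalIntegral.integral_sub i1 i3, intervalIntegral.integral_smul,
      intervalIntegral.integral_add i2 (hLFi A),
      intervalIntegral.integral_smul, (L Λ).intervalIntegral_comp_comm (hFi z₀),
      (L A).intervalIntegral_comp_comm (hFi z₀)]
  -- conclude
  have hYz : Y z₀ = ∫ t in (0:ℝ)..1, F z₀ t := hY z₀
  have hz : z₀ • (∫ t in (0:ℝ)..1, Fd z₀ t) = z₀ • (Λ *ᵥ Y z₀) + A *ᵥ Y z₀ := by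
    have h0 : (0 : Fin n → ℂ) = z₀ • (∫ t in (0:ℝ)..1, Fd z₀ t)
        - (z₀ • (L Λ (∫ t in (0:ℝ)..1, F z₀ t)) + L A (∫ t in (0:ℝ)..1, F z₀ t)) := by
      rw [← hInt, hIBP, hg0]
    rw [hYz, ← hLapp Λ, ← hLapp A]
    have := sub_eq_zero.1 h0.symm
    exact this
  have hDval : (∫ t in (0:ℝ)..1, Fd z₀ t) = (Λ + z₀⁻¹ • A) *ᵥ Y z₀ := by
    have h2 : (∫ t in (0:ℝ)..1, Fd z₀ t) = z₀⁻¹ • (z₀ • (∫ t in (0:ℝ)..1, Fd z₀ t)) := by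
      rw [smul_smul, inv_mul_cancel₀ hz₀, one_smul]
    rw [h2, hz, smul_add, smul_smul, inv_mul_cancel₀ hz₀, one_smul,
      Matrix.add_mulVec, Matrix.smul_mulVec]
  rw [hDval.symm]
  have hYfun : Y = fun z => ∫ t in (0:ℝ)..1, F z t := funext hY
  rw [hYfun]
  exact hD
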